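/- For the hexagonal lattice and λ ∈ (−1,1)∖{0}, every point of M^ℂ_{λ,reg} ∩ Ω_a can be joined by a continuous path inside M^ℂ_{λ,reg} ∩ Ω_a to a point of M^ℂ_{λ,reg} ∩ 𝕋², where M^ℂ_λ = {z ∈ 𝕋²_ℂ : cos z₁ + cos z₂ + cos(z₁−z₂) = (3/2)(3λ²−1)} and Ω_a = {z : |Im z| < a}. -/

import Mathlib

open Complex

/-- The complexified Fermi surface of the hexagonal lattice at energy `λ`
(lifted from `𝕋²_ℂ` to `ℂ²`): `cos z₁ + cos z₂ + cos(z₁−z₂) = (3/2)(3λ²−1)`. -/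
def hexFermiC (lam : ℝ) : Set (ℂ × ℂ) :=
  {z | Complex.cos z.1 + Complex.cos z.2 + Complex.cos (z.1 - z.2)
        = ((3 / 2 : ℝ) * (3 * lam ^ 2 - 1) : ℝ)}

/-- Its regular part: points where the gradient of
`p(z,λ) = λ² − (1/9)(3 + 2(cos z₁ + cos z₂ + cos(z₁−z₂)))` does not vanish. -/
def hexFermiReg (lam : ℝ) : Set (ℂ × ℂ) :=
  {z | z ∈ hexFermiC lam ∧
    (Complex.sin z.1 + Complex.sin (z.1 - z.2) ≠ 0 ∨
     Complex.sin z.2 - Complex.sin (z.1 - z.2) ≠ 0)}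

/-- `Ω_a = {z : |Im z| < a}`. -/
def hexStrip (a : ℝ) : Set (ℂ × ℂ) :=
  {z | z.1.im ^ 2 + z.2.im ^ 2 < a ^ 2}


open Real

noncomputable section
set_option maxHeartbeats 1000000



/-- real arcosh -/
def acoshR (x : ℝ) : ℝ := Real.log (x + Real.sqrt (x^2 - 1))

lemma acoshR_arg_ge (x : ℝ) (hx : 1 ≤ x) : 1 ≤ x + Real.sqrt (x^2 - 1) := by
  nlinarith [Real.sqrt_nonneg (x^2 - 1)]

lemma acoshR_nonneg (x : ℝ) (hx : 1 ≤ x) : 0 ≤ acoshR x :=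
  Real.log_nonneg (acoshR_arg_ge x hx)

lemma acoshR_one : acoshR 1 = 0 := by
  simp [acoshR]

lemma sqrt_inv_eq (x : ℝ) (hx : 1 ≤ x) :
    (x + Real.sqrt (x^2 - 1))⁻¹ = x - Real.sqrt (x^2 - 1) := by
  have h1 : (0:ℝ) ≤ x^2 - 1 := by nlinarith
  have h2 : (x + Real.sqrt (x^2-1)) * (x - Real.sqrt (x^2-1)) = 1 := by
    have := Real.sq_sqrt h1
    nlinarith
  field_simp
  nlinarith [Real.sqrt_nonneg (x^2-1)]

lemma cosh_acoshR (x : ℝ) (hx : 1 ≤ x) : Real.cosh (acoshR x) = x := by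
  have hpos : 0 < x + Real.sqrt (x^2 - 1) := lt_of_lt_of_le one_pos (acoshR_arg_ge x hx)
  rw [acoshR, Real.cosh_log hpos, sqrt_inv_eq x hx]
  ring

lemma sinh_acoshR (x : ℝ) (hx : 1 ≤ x) : Real.sinh (acoshR x) = Real.sqrt (x^2 - 1) := by
  have hpos : 0 < x + Real.sqrt (x^2 - 1) := lt_of_lt_of_le one_pos (acoshR_arg_ge x hx)
  rw [acoshR, Real.sinh_log hpos, sqrt_inv_eq x hx]
  ring

lemma acoshR_mono {x y : ℝ} (hx : 1 ≤ x) (hxy : x ≤ y) : acoshR x ≤ acoshR y := by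
  have h1 : (0:ℝ) < x + Real.sqrt (x^2 - 1) := lt_of_lt_of_le one_pos (acoshR_arg_ge x hx)
  apply Real.log_le_log h1
  have : Real.sqrt (x^2-1) ≤ Real.sqrt (y^2-1) := by
    apply Real.sqrt_le_sqrt; nlinarith
  linarith

/-- `E` functional: semi-major axis of the Bernstein ellipse through η. -/
def EpC (η : ℂ) : ℝ := (‖η + 1‖ + ‖η - 1‖) / 2

/-- `F` functional. -/
def FpC (η : ℂ) : ℝ := (‖η + 1‖ - ‖η - 1‖) / 2

lemma one_le_EpC (η : ℂ) : 1 ≤ EpC η := by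
  have h := norm_sub_le_norm_sub_add_norm_sub (η + 1) 0 (η - 1)
  simp only [sub_zero, zero_sub] at h
  have h2 : η + 1 - (η - 1) = 2 := by ring
  rw [h2, norm_neg] at h
  have : ‖(2:ℂ)‖ = 2 := Complex.norm_two
  unfold EpC
  nlinarith [norm_nonneg (η - 1), norm_nonneg (η+1)]

lemma FpC_le_one (η : ℂ) : |FpC η| ≤ 1 := by
  have h1 := norm_sub_le_norm_sub_add_norm_sub (η + 1) (η - 1) 0
  have h2 := norm_sub_le_norm_sub_add_norm_sub (η - 1) (η + 1) 0
  have h3 : η + 1 - (η - 1) = 2 := by ring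
  have h4 : η - 1 - (η + 1) = -2 := by ring
  simp only [sub_zero] at h1 h2
  rw [h3] at h1; rw [h4] at h2
  have c2 : ‖(2:ℂ)‖ = 2 := Complex.norm_two
  have c2' : ‖(-2:ℂ)‖ = 2 := by
    rw [norm_neg]; exact c2
  rw [c2] at h1; rw [c2'] at h2
  rw [abs_le]; constructor <;> [skip; skip] <;> unfold FpC <;> linarith

lemma EpC_mul_FpC (η : ℂ) : EpC η * FpC η = η.re := by
  unfold EpC FpC
  have h1 : (‖η+1‖)^2 = (η.re+1)^2 + η.im^2 := by
    rw [Complex.sq_norm, Complex.normSq_apply]; simp [Complex.add_re, Complex.add_im]; ring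
  have h2 : (‖η-1‖)^2 = (η.re-1)^2 + η.im^2 := by
    rw [Complex.sq_norm, Complex.normSq_apply]; simp [Complex.sub_re, Complex.sub_im]; ring
  nlinarith [h1, h2]

lemma EpC_sq_add_FpC_sq (η : ℂ) : (EpC η)^2 + (FpC η)^2 = η.re^2 + η.im^2 + 1 := by
  unfold EpC FpC
  have h1 : (‖η+1‖)^2 = (η.re+1)^2 + η.im^2 := by
    rw [Complex.sq_norm, Complex.normSq_apply]; simp [Complex.add_re, Complex.add_im]; ring
  have h2 : (‖η-1‖)^2 = (η.re-1)^2 + η.im^2 := by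
    rw [Complex.sq_norm, Complex.normSq_apply]; simp [Complex.sub_re, Complex.sub_im]; ring
  nlinarith [h1, h2]

lemma continuous_EpC : Continuous EpC := by
  unfold EpC
  exact ((continuous_norm.comp (continuous_id.add continuous_const)).add
    (continuous_norm.comp (continuous_id.sub continuous_const))).div_const 2

lemma continuous_FpC : Continuous FpC := by
  unfold FpC
  exact ((continuous_norm.comp (continuous_id.add continuous_const)).sub
    (continuous_norm.comp (continuous_id.sub continuous_const))).div_const 2

lemma continuous_acoshR_EpC : Continuous (fun η => acoshR (EpC η)) := by
  unfold acoshR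
  apply Continuous.log
  · exact continuous_EpC.add ((continuous_EpC.pow 2).sub continuous_const).sqrt
  · intro x
    have h := one_le_EpC x
    have := Real.sqrt_nonneg ((EpC x)^2 - 1)
    positivity

/-- principal "lower" lift: `cos (zetaL η) = η` whenever `Im η ≤ 0`. -/
def zetaL (η : ℂ) : ℂ := (Real.arccos (FpC η) : ℝ) + (acoshR (EpC η) : ℝ) * I

lemma zetaL_im (η : ℂ) : (zetaL η).im = acoshR (EpC η) := by
  simp [zetaL]

lemma continuous_zetaL : Continuous zetaL := by
  unfold zetaL
  apply Continuous.add
  · exact Complex.continuous_ofReal.comp (Real.continuous_arccos.comp continuous_FpC)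
  · exact (Complex.continuous_ofReal.comp continuous_acoshR_EpC).mul continuous_const

lemma cos_zetaL (η : ℂ) : Complex.cos (zetaL η) = (η.re : ℝ) - (|η.im| : ℝ) * I := by
  have hE := one_le_EpC η
  have hF := FpC_le_one η
  rw [abs_le] at hF
  unfold zetaL
  rw [Complex.cos_add]
  rw [Complex.cos_mul_I, Complex.sin_mul_I]
  rw [← Complex.ofReal_cos, ← Complex.ofReal_sin, ← Complex.ofReal_cosh, ← Complex.ofReal_sinh]
  rw [Real.cos_arccos hF.1 hF.2, Real.sin_arccos, cosh_acoshR _ hE, sinh_acoshR _ hE]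
  have key : Real.sqrt (1 - (FpC η)^2) * Real.sqrt ((EpC η)^2 - 1) = |η.im| := by
    rw [← Real.sqrt_mul (by nlinarith : (0:ℝ) ≤ 1 - (FpC η)^2)]
    have h2 : (1 - (FpC η)^2) * ((EpC η)^2 - 1) = η.im^2 := by
      have hEF := EpC_mul_FpC η
      have hS := EpC_sq_add_FpC_sq η
      linear_combination hS - (EpC η * FpC η + η.re) * hEF
    rw [h2, Real.sqrt_sq_eq_abs]
  have hre : (EpC η) * (FpC η) = η.re := EpC_mul_FpC η
  set A := Real.sqrt (1 - FpC η ^ 2) with hA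
  set Bq := Real.sqrt ((EpC η)^2 - 1) with hB
  apply Complex.ext
  · push_cast
    simp only [Complex.sub_re, Complex.mul_re, Complex.mul_im, Complex.ofReal_re,
      Complex.ofReal_im, Complex.I_re, Complex.I_im]
    ring_nf
    nlinarith [hre]
  · push_cast
    simp only [Complex.sub_im, Complex.mul_re, Complex.mul_im, Complex.ofReal_re,
      Complex.ofReal_im, Complex.I_re, Complex.I_im]
    ring_nf
    nlinarith [key]

lemma cos_zetaL_of_im_nonpos {η : ℂ} (h : η.im ≤ 0) : Complex.cos (zetaL η) = η := by
  rw [cos_zetaL, _root_.abs_of_nonpos h]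
  rw [show ((η.re : ℂ) - ((-η.im : ℝ):ℂ) * I = (η.re : ℂ) + (η.im:ℂ) * I) by push_cast; ring]
  exact Complex.re_add_im η

lemma cos_conj_zetaL_of_im_nonneg {η : ℂ} (h : 0 ≤ η.im) :
    Complex.cos ((starRingEnd ℂ) (zetaL η)) = η := by
  have h1 : Complex.cos (zetaL η) = (starRingEnd ℂ) η := by
    rw [cos_zetaL, _root_.abs_of_nonneg h]
    simp [Complex.ext_iff]
  rw [Complex.cos_conj, h1, Complex.conj_conj]




lemma keyX (b q τ τ' : ℝ) (hb : 0 ≤ b) (hq : q < 1) (hK : 0 ≤ b + q)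
    (h0 : 0 ≤ τ) (hττ : τ ≤ τ') (h1 : τ' ≤ 1) :
    (q*τ' + b + 1) + Real.sqrt ((q*τ' + b + 1)^2 - 4*(b+q)*τ') ≤
    (q*τ + b + 1) + Real.sqrt ((q*τ + b + 1)^2 - 4*(b+q)*τ) := by
  have h0' : 0 ≤ τ' := le_trans h0 hττ
  have hτ1 : τ ≤ 1 := le_trans hττ h1
  have inner_nonneg : ∀ σ : ℝ, 0 ≤ σ → σ ≤ 1 → 0 ≤ (q*σ + b + 1)^2 - 4*(b+q)*σ := by
    intro σ hσ0 hσ1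
    have iden : (q*σ + b + 1)^2 - 4*(b+q)*σ
        = ((b+q)*σ - 1)^2 + (b*(1-σ))^2 + 2*(b*(1-σ))*((b+q)*σ + 1) := by ring
    rw [iden]
    have t1 : 0 ≤ b*(1-σ) := mul_nonneg hb (by linarith)
    have t2 : 0 ≤ (b+q)*σ := mul_nonneg hK hσ0
    nlinarith [sq_nonneg ((b+q)*σ - 1), sq_nonneg (b*(1-σ))]
  have hin := inner_nonneg τ h0 hτ1
  have hin' := inner_nonneg τ' h0' h1
  rcases le_or_gt q 0 with hq0 | hq0
  · -- q ≤ 0 : both the linear and sqrt parts decrease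
    have hQle : (q*τ' + b + 1) ≤ (q*τ + b + 1) := by nlinarith
    have hQpos : 0 ≤ q*τ' + b + 1 := by nlinarith [mul_nonneg hK h0']
    have hsq : (q*τ' + b + 1)^2 - 4*(b+q)*τ' ≤ (q*τ + b + 1)^2 - 4*(b+q)*τ := by
      nlinarith [mul_nonneg hK (by linarith : (0:ℝ) ≤ τ' - τ)]
    have := Real.sqrt_le_sqrt hsq
    linarith
  · -- 0 < q < 1
    obtain ⟨R, hRnn, hRsq, hReq⟩ :
        ∃ R, 0 ≤ R ∧ R^2 = (q*τ + b + 1)^2 - 4*(b+q)*τ ∧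
          Real.sqrt ((q*τ + b + 1)^2 - 4*(b+q)*τ) = R :=
      ⟨_, Real.sqrt_nonneg _, Real.sq_sqrt hin, rfl⟩
    rw [hReq]
    -- bound : q * (Q + R) ≤ 2 * K
    have e1 : 0 ≤ 2*(b+q) - q*(q*τ + b + 1) := by
      have iden : 2*(b+q) - q*(q*τ + b + 1) = b*(2-q) + q*(1 - q*τ) := by ring
      rw [iden]
      have hqτ : q*τ ≤ 1 := by nlinarith
      nlinarith [mul_nonneg hb (by linarith : (0:ℝ) ≤ 2 - q)]
    have e2 : (q*R)^2 ≤ (2*(b+q) - q*(q*τ + b + 1))^2 := by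
      have expand : (2*(b+q) - q*(q*τ + b + 1))^2 - (q*R)^2
          = 4*(b+q)*((b+q) - (q*b + q)) + (q^2) * (((q*τ + b + 1)^2 - 4*(b+q)*τ) - R^2) := by
        ring
      rw [hRsq] at expand
      have h3 : q*b + q ≤ b + q := by nlinarith
      nlinarith [mul_nonneg hK (by linarith : (0:ℝ) ≤ (b+q) - (q*b + q))]
    have hbound : q * ((q*τ + b + 1) + R) ≤ 2*(b+q) := by
      have e3 : q*R ≤ 2*(b+q) - q*(q*τ + b + 1) := by
        nlinarith [mul_nonneg (le_of_lt hq0) hRnn]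
      nlinarith
    -- step : q*(1-τ) ≤ R
    have hstep : q*(1-τ) ≤ R := by
      have key0 : (q*(1-τ))^2 ≤ (q*τ + b + 1)^2 - 4*(b+q)*τ := by
        have iden : (q*τ + b + 1)^2 - 4*(b+q)*τ - (q*(1-τ))^2
            = (1-τ)*((b+1)^2 - q^2) + τ*(b+q-1)^2 := by ring
        nlinarith [mul_nonneg (by linarith : (0:ℝ) ≤ 1-τ)
            (by nlinarith : (0:ℝ) ≤ (b+1)^2 - q^2),
          mul_nonneg h0 (sq_nonneg (b+q-1))]
      have := Real.sqrt_le_sqrt key0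
      rwa [Real.sqrt_sq (by nlinarith : (0:ℝ) ≤ q*(1-τ)), hReq] at this
    have hRqv : 0 ≤ R - q*(τ'-τ) := by nlinarith
    have final : Real.sqrt ((q*τ' + b + 1)^2 - 4*(b+q)*τ') ≤ R - q*(τ'-τ) := by
      have diff : (q*τ' + b + 1)^2 - 4*(b+q)*τ'
          = (R - q*(τ'-τ))^2 - 2*(τ'-τ)*(2*(b+q) - q*((q*τ + b + 1) + R)) := by
        linear_combination -hRsq
      have hle : (q*τ' + b + 1)^2 - 4*(b+q)*τ' ≤ (R - q*(τ'-τ))^2 := by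
        rw [diff]
        nlinarith [mul_nonneg (by linarith : (0:ℝ) ≤ τ'-τ)
          (by linarith : (0:ℝ) ≤ 2*(b+q) - q*((q*τ + b + 1) + R))]
      calc Real.sqrt ((q*τ' + b + 1)^2 - 4*(b+q)*τ')
          ≤ Real.sqrt ((R - q*(τ'-τ))^2) := Real.sqrt_le_sqrt hle
        _ = R - q*(τ'-τ) := Real.sqrt_sq hRqv
    nlinarith


lemma le_of_sq_le_sq' (x y : ℝ) (hx : 0 ≤ x) (hy : 0 ≤ y) (h : x^2 ≤ y^2) : x ≤ y := by
  nlinarith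

lemma EpC_mk (x y : ℝ) :
    EpC ((x:ℂ) + (y:ℂ)*I) = (Real.sqrt ((x+1)^2 + y^2) + Real.sqrt ((x-1)^2 + y^2))/2 := by
  unfold EpC
  have h1 : (x:ℂ) + (y:ℂ)*I + 1 = ((x+1 : ℝ):ℂ) + (y:ℂ)*I := by push_cast; ring
  have h2 : (x:ℂ) + (y:ℂ)*I - 1 = ((x-1 : ℝ):ℂ) + (y:ℂ)*I := by push_cast; ring
  rw [h1, h2, Complex.norm_def, Complex.norm_def, Complex.normSq_add_mul_I,
    Complex.normSq_add_mul_I]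


/-- along the ellipse `c ↦ α c + i β √(1-c²)`, `EpC` is nonincreasing in `c²`,
provided `α² - β² < 1`. -/
lemma EpMono (α β c c' : ℝ) (hq : α^2 - β^2 < 1) (hcc : c^2 ≤ c'^2) (hc1 : c'^2 ≤ 1) :
    EpC ((α*c' : ℝ) + ((β*Real.sqrt (1 - c'^2) : ℝ):ℂ)*I) ≤
    EpC ((α*c : ℝ) + ((β*Real.sqrt (1 - c^2) : ℝ):ℂ)*I) := by
  have hc2 : c^2 ≤ 1 := le_trans hcc hc1
  have hy : (β*Real.sqrt (1-c^2))^2 = β^2*(1-c^2) := by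
    rw [mul_pow, Real.sq_sqrt (by linarith)]
  have hy' : (β*Real.sqrt (1-c'^2))^2 = β^2*(1-c'^2) := by
    rw [mul_pow, Real.sq_sqrt (by linarith)]
  rw [EpC_mk, EpC_mk, hy, hy']
  have key := keyX (β^2) (α^2-β^2) (c^2) (c'^2) (sq_nonneg β) hq
    (by nlinarith [sq_nonneg α] : (0:ℝ) ≤ β^2 + (α^2-β^2)) (sq_nonneg c) hcc hc1
  have hpn : (0:ℝ) ≤ (α*c+1)^2 + β^2*(1-c^2) := by nlinarith [sq_nonneg (α*c+1), sq_nonneg (α*c-1), sq_nonneg β, hc2, sq_nonneg c]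
  have hmn : (0:ℝ) ≤ (α*c-1)^2 + β^2*(1-c^2) := by nlinarith [sq_nonneg (α*c+1), sq_nonneg (α*c-1), sq_nonneg β, hc2, sq_nonneg c]
  have hpn' : (0:ℝ) ≤ (α*c'+1)^2 + β^2*(1-c'^2) := by nlinarith [sq_nonneg (α*c'+1), sq_nonneg (α*c'-1), sq_nonneg β, hc1, sq_nonneg c']
  have hmn' : (0:ℝ) ≤ (α*c'-1)^2 + β^2*(1-c'^2) := by nlinarith [sq_nonneg (α*c'+1), sq_nonneg (α*c'-1), sq_nonneg β, hc1, sq_nonneg c']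
  apply le_of_sq_le_sq' _ _ (by positivity) (by positivity)
  have e3 := Real.sq_sqrt hpn
  have e4 := Real.sq_sqrt hmn
  have e3' := Real.sq_sqrt hpn'
  have e4' := Real.sq_sqrt hmn'
  have e2 : Real.sqrt ((α*c+1)^2 + β^2*(1-c^2)) * Real.sqrt ((α*c-1)^2 + β^2*(1-c^2))
      = Real.sqrt (((α^2-β^2)*c^2 + β^2 + 1)^2 - 4*(β^2+(α^2-β^2))*c^2) := by
    rw [← Real.sqrt_mul hpn]
    congr 1
    ring
  have e2' : Real.sqrt ((α*c'+1)^2 + β^2*(1-c'^2)) * Real.sqrt ((α*c'-1)^2 + β^2*(1-c'^2))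
      = Real.sqrt (((α^2-β^2)*c'^2 + β^2 + 1)^2 - 4*(β^2+(α^2-β^2))*c'^2) := by
    rw [← Real.sqrt_mul hpn']
    congr 1
    ring
  have exp1 : ((Real.sqrt ((α*c'+1)^2 + β^2*(1-c'^2)) + Real.sqrt ((α*c'-1)^2 + β^2*(1-c'^2)))/2)^2
      = (((α^2-β^2)*c'^2 + β^2 + 1) + Real.sqrt (((α^2-β^2)*c'^2 + β^2 + 1)^2 - 4*(β^2+(α^2-β^2))*c'^2))/2 := by
    have expand : ((Real.sqrt ((α*c'+1)^2 + β^2*(1-c'^2)) + Real.sqrt ((α*c'-1)^2 + β^2*(1-c'^2)))/2)^2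
        = ((Real.sqrt ((α*c'+1)^2 + β^2*(1-c'^2)))^2 + (Real.sqrt ((α*c'-1)^2 + β^2*(1-c'^2)))^2
          + 2*(Real.sqrt ((α*c'+1)^2 + β^2*(1-c'^2)) * Real.sqrt ((α*c'-1)^2 + β^2*(1-c'^2))))/4 := by
      ring
    rw [expand, e3', e4', e2']
    ring
  have exp0 : ((Real.sqrt ((α*c+1)^2 + β^2*(1-c^2)) + Real.sqrt ((α*c-1)^2 + β^2*(1-c^2)))/2)^2
      = (((α^2-β^2)*c^2 + β^2 + 1) + Real.sqrt (((α^2-β^2)*c^2 + β^2 + 1)^2 - 4*(β^2+(α^2-β^2))*c^2))/2 := by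
    have expand : ((Real.sqrt ((α*c+1)^2 + β^2*(1-c^2)) + Real.sqrt ((α*c-1)^2 + β^2*(1-c^2)))/2)^2
        = ((Real.sqrt ((α*c+1)^2 + β^2*(1-c^2)))^2 + (Real.sqrt ((α*c-1)^2 + β^2*(1-c^2)))^2
          + 2*(Real.sqrt ((α*c+1)^2 + β^2*(1-c^2)) * Real.sqrt ((α*c-1)^2 + β^2*(1-c^2))))/4 := by
      ring
    rw [expand, e3, e4, e2]
    ring
  rw [exp1, exp0]
  linarith [key]




lemma EpC_ofReal (x : ℝ) : EpC ((x:ℝ):ℂ) = max |x| 1 := by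
  have h1 : ((x:ℝ):ℂ)+1 = ((x+1:ℝ):ℂ) := by push_cast; ring
  have h2 : ((x:ℝ):ℂ)-1 = ((x-1:ℝ):ℂ) := by push_cast; ring
  unfold EpC
  rw [h1, h2, Complex.norm_real, Complex.norm_real, Real.norm_eq_abs, Real.norm_eq_abs]
  rcases le_total 1 x with h | h
  · rw [_root_.abs_of_nonneg (by linarith : (0:ℝ) ≤ x),
      max_eq_left (by linarith : (1:ℝ) ≤ x),
      _root_.abs_of_nonneg (by linarith : (0:ℝ) ≤ x+1),
      _root_.abs_of_nonneg (by linarith : (0:ℝ) ≤ x-1)]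
    ring
  · rcases le_total x (-1) with h' | h'
    · rw [_root_.abs_of_nonpos (by linarith : x ≤ 0),
        max_eq_left (by linarith : (1:ℝ) ≤ -x),
        _root_.abs_of_nonpos (by linarith : x+1 ≤ 0),
        _root_.abs_of_nonpos (by linarith : x-1 ≤ 0)]
      ring
    · rw [max_eq_right (abs_le.mpr ⟨by linarith, by linarith⟩),
        _root_.abs_of_nonneg (by linarith : (0:ℝ) ≤ x+1),
        _root_.abs_of_nonpos (by linarith : x-1 ≤ 0)]
      ring

lemma line_eta2 (r rs ρ : ℝ) (hρ0 : 0 ≤ ρ) (hrs1 : rs ≤ 1) (h2 : ρ ≤ max r rs) :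
    max |ρ| 1 ≤ max |r| 1 := by
  rcases le_total ρ 1 with h | h
  · rw [max_eq_right (abs_le.mpr ⟨by linarith, h⟩)]
    exact le_max_right _ _
  · have hρr : ρ ≤ r ∨ ρ ≤ 1 := by
      rcases le_total r rs with hc | hc
      · right; rw [max_eq_right hc] at h2; linarith
      · left; rwa [max_eq_left hc] at h2
    rcases hρr with hρr | hρ1
    · calc max |ρ| 1 = |ρ| := max_eq_left (by rw [_root_.abs_of_nonneg (by linarith)]; linarith)
        _ = ρ := abs_of_nonneg (by linarith)
        _ ≤ r := hρr
        _ ≤ |r| := le_abs_self r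
        _ ≤ max |r| 1 := le_max_left _ _
    · have hρeq : ρ = 1 := le_antisymm hρ1 h
      rw [hρeq]
      simp

lemma mono1 (μ x y : ℝ) (hx : 0 < x) (hxy : x ≤ y) (hμ : 0 ≤ μ) :
    μ/y - y ≤ μ/x - x := by
  have hy : 0 < y := lt_of_lt_of_le hx hxy
  have := div_le_div_of_nonneg_left hμ hx hxy
  linarith

lemma line_eta1 (μ r rs ρ : ℝ) (hr : 0 < r) (hρ : 0 < ρ)
    (hmin : min r rs ≤ ρ) (hmax : ρ ≤ max r rs)
    (hcase : (0 < μ ∧ μ < 2 ∧ rs = 1) ∨ (μ < 0 ∧ rs^2 = -μ ∧ 0 < rs)) :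
    max |μ/ρ - ρ| 1 ≤ max |μ/r - r| 1 := by
  rcases hcase with ⟨hμ0, hμ2, hrs⟩ | ⟨hμ0, hrs, hrs0⟩
  · subst hrs
    rcases le_total r 1 with hc | hc
    · have hρr : r ≤ ρ := by rwa [min_eq_left hc] at hmin
      have hρ1 : ρ ≤ 1 := by rwa [max_eq_right hc] at hmax
      have hup : μ/ρ - ρ ≤ μ/r - r := mono1 μ r ρ hr hρr (le_of_lt hμ0)
      have hlo : μ/1 - 1 ≤ μ/ρ - ρ := mono1 μ ρ 1 hρ hρ1 (le_of_lt hμ0)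
      rw [div_one] at hlo
      rcases le_total 0 (μ/ρ - ρ) with hs | hs
      · calc max |μ/ρ - ρ| 1 = max (μ/ρ - ρ) 1 := by rw [_root_.abs_of_nonneg hs]
          _ ≤ max (μ/r - r) 1 := max_le_max hup (le_refl 1)
          _ ≤ max |μ/r - r| 1 := max_le_max (le_abs_self _) (le_refl 1)
      · have : |μ/ρ - ρ| ≤ 1 := by
          rw [_root_.abs_of_nonpos hs]; linarith
        rw [max_eq_right this]; exact le_max_right _ _
    · have hρ1 : 1 ≤ ρ := by rwa [min_eq_right hc] at hmin
      have hρr : ρ ≤ r := by rwa [max_eq_left hc] at hmax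
      have hup : μ/r - r ≤ μ/ρ - ρ := mono1 μ ρ r hρ hρr (le_of_lt hμ0)
      have hlo : μ/ρ - ρ ≤ μ/1 - 1 := mono1 μ 1 ρ one_pos hρ1 (le_of_lt hμ0)
      rw [div_one] at hlo
      rcases le_total 0 (μ/ρ - ρ) with hs | hs
      · have : |μ/ρ - ρ| ≤ 1 := by rw [_root_.abs_of_nonneg hs]; linarith
        rw [max_eq_right this]; exact le_max_right _ _
      · calc max |μ/ρ - ρ| 1 = max (-(μ/ρ - ρ)) 1 := by rw [_root_.abs_of_nonpos hs]
          _ ≤ max (-(μ/r - r)) 1 := max_le_max (by linarith) (le_refl 1)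
          _ ≤ max |μ/r - r| 1 := max_le_max (neg_le_abs _) (le_refl 1)
  · -- μ < 0
    have habsρ : |μ/ρ - ρ| = ρ - μ/ρ := by
      rw [_root_.abs_of_nonpos]
      · ring
      · have : μ/ρ < 0 := div_neg_of_neg_of_pos hμ0 hρ
        linarith
    have habsr : |μ/r - r| = r - μ/r := by
      rw [_root_.abs_of_nonpos]
      · ring
      · have : μ/r < 0 := div_neg_of_neg_of_pos hμ0 hr
        linarith
    have key : ρ - μ/ρ ≤ r - μ/r := by
      have iden : (r - μ/r) - (ρ - μ/ρ) = (r-ρ)*(ρ*r+μ)/(ρ*r) := by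
        field_simp
        ring
      have sign : 0 ≤ (r-ρ)*(ρ*r+μ) := by
        rcases le_total r rs with hcc | hcc
        · have hρrs : ρ ≤ rs := by rwa [max_eq_right hcc] at hmax
          have hρr : r ≤ ρ := by rwa [min_eq_left hcc] at hmin
          have : ρ*r ≤ rs^2 := by nlinarith
          have h1 : r - ρ ≤ 0 := by linarith
          have h2 : ρ*r + μ ≤ 0 := by nlinarith
          nlinarith
        · have hρrs : rs ≤ ρ := by rwa [min_eq_right hcc] at hmin
          have hρr : ρ ≤ r := by rwa [max_eq_left hcc] at hmax
          have : rs^2 ≤ ρ*r := by nlinarith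
          have h1 : 0 ≤ r - ρ := by linarith
          have h2 : 0 ≤ ρ*r + μ := by nlinarith
          nlinarith
      have : 0 ≤ (r - μ/r) - (ρ - μ/ρ) := by
        rw [iden]
        positivity
      linarith
    rw [habsρ, habsr]
    exact max_le_max key (le_refl 1)


lemma sinpq (p q : ℂ) : Complex.sin (p+q) + Complex.sin (p-q) = 2 * Complex.sin p * Complex.cos q := by
  rw [Complex.sin_add, Complex.sin_sub]; ring

lemma sinmq (p q : ℂ) : Complex.sin (p+q) - Complex.sin (p-q) = 2 * Complex.cos p * Complex.sin q := by
  rw [Complex.sin_add, Complex.sin_sub]; ring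

lemma fermi_sum (ζ₁ ζ₂ : ℂ) :
    Complex.cos (ζ₁+ζ₂) + Complex.cos (ζ₁-ζ₂) + Complex.cos ((ζ₁+ζ₂) - (ζ₁-ζ₂))
      = 2 * Complex.cos ζ₁ * Complex.cos ζ₂ + 2 * (Complex.cos ζ₂)^2 - 1 := by
  have h : (ζ₁+ζ₂) - (ζ₁-ζ₂) = 2*ζ₂ := by ring
  rw [h, Complex.cos_add, Complex.cos_sub, Complex.cos_two_mul]
  ring

lemma reg_all (lam : ℝ) (hl1 : lam^2 < 1) (hl0 : lam ≠ 0) (hl19 : lam^2 ≠ 1/9)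
    (z : ℂ × ℂ) (hz : z ∈ hexFermiC lam) : z ∈ hexFermiReg lam := by
  refine ⟨hz, ?_⟩
  by_contra hcon
  push_neg at hcon
  obtain ⟨h1, h2⟩ := hcon
  have f1 : 2 * Complex.sin (z.1 - z.2/2) * Complex.cos (z.2/2) = 0 := by
    have e := sinpq (z.1 - z.2/2) (z.2/2)
    rw [show (z.1 - z.2/2) + z.2/2 = z.1 by ring,
      show (z.1 - z.2/2) - z.2/2 = z.1 - z.2 by ring] at e
    rw [← e]; exact h1
  have f2 : 2 * Complex.cos (z.1/2) * Complex.sin (z.2 - z.1/2) = 0 := by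
    have e := sinmq (z.1/2) (z.2 - z.1/2)
    rw [show z.1/2 + (z.2 - z.1/2) = z.2 by ring,
      show z.1/2 - (z.2 - z.1/2) = z.1 - z.2 by ring] at e
    rw [← e]; exact h2
  have hC : Complex.cos z.1 + Complex.cos z.2 + Complex.cos (z.1 - z.2)
      = ((3 / 2 : ℝ) * (3 * lam ^ 2 - 1) : ℝ) := hz
  have half_cos : ∀ x : ℂ, Complex.cos (x/2) = 0 → Complex.cos x = -1 ∧ Complex.sin x = 0 := by
    intro x hx
    constructor
    · rw [show x = 2*(x/2) by ring, Complex.cos_two_mul, hx]; ring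
    · rw [show x = 2*(x/2) by ring, Complex.sin_two_mul, hx]; ring
  have half_sin : ∀ x : ℂ, Complex.sin (x/2) = 0 → Complex.cos x = 1 ∧ Complex.sin x = 0 := by
    intro x hx
    have hc2 : (Complex.cos (x/2))^2 = 1 := by
      have := Complex.sin_sq_add_cos_sq (x/2)
      rw [hx] at this; simpa using this
    constructor
    · rw [show x = 2*(x/2) by ring, Complex.cos_two_mul, hc2]; ring
    · rw [show x = 2*(x/2) by ring, Complex.sin_two_mul, hx]; ring
  have hCne1 : ((3 / 2 : ℝ) * (3 * lam ^ 2 - 1) : ℝ) ≠ (-1 : ℝ) := by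
    intro h; apply hl19; nlinarith
  have hCne3 : ((3 / 2 : ℝ) * (3 * lam ^ 2 - 1) : ℝ) ≠ (3 : ℝ) := by
    intro h; nlinarith
  have hCne32 : ((3 / 2 : ℝ) * (3 * lam ^ 2 - 1) : ℝ) ≠ (-3/2 : ℝ) := by
    intro h
    apply hl0
    have : lam^2 = 0 := by nlinarith
    exact pow_eq_zero_iff (n := 2) (by norm_num) |>.mp this
  have sum_ne : ∀ v : ℝ, Complex.cos z.1 + Complex.cos z.2 + Complex.cos (z.1 - z.2) = (v:ℂ) →
      ((3 / 2 : ℝ) * (3 * lam ^ 2 - 1) : ℝ) = v := by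
    intro v hv
    rw [hv] at hC
    exact_mod_cast hC.symm
  rcases mul_eq_zero.mp f1 with f1' | hcosq
  · rcases mul_eq_zero.mp f1' with h20 | hsinp
    · exact two_ne_zero h20
    · rcases mul_eq_zero.mp f2 with f2' | hsinq2
      · rcases mul_eq_zero.mp f2' with h20 | hcosP
        · exact two_ne_zero h20
        · -- CASE iii : sin (z₁ - z₂/2) = 0 ∧ cos (z₁/2) = 0
          obtain ⟨hc1, hs1⟩ := half_cos z.1 hcosP
          have hs2half : Complex.sin (z.2/2) = 0 := by
            have e := Complex.sin_sub z.1 (z.2/2)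
            rw [hs1, hc1] at e
            rw [e] at hsinp
            simpa using hsinp
          obtain ⟨hc2, hs2⟩ := half_sin z.2 hs2half
          apply hCne1
          apply sum_ne
          rw [Complex.cos_sub, hc1, hc2, hs1, hs2]
          push_cast; ring
      · -- CASE iv : sin (z₁ - z₂/2) = 0 ∧ sin (z₂ - z₁/2) = 0
        have hcp2 : (Complex.cos (z.1 - z.2/2))^2 = 1 := by
          have := Complex.sin_sq_add_cos_sq (z.1 - z.2/2)
          rw [hsinp] at this; simpa using this
        have hcq2 : (Complex.cos (z.2 - z.1/2))^2 = 1 := by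
          have := Complex.sin_sq_add_cos_sq (z.2 - z.1/2)
          rw [hsinq2] at this; simpa using this
        have key1 : Complex.cos ((z.1+z.2)/2)
            = Complex.cos (z.1 - z.2/2) * Complex.cos (z.2 - z.1/2) := by
          have e := Complex.cos_add (z.1 - z.2/2) (z.2 - z.1/2)
          rw [show (z.1 - z.2/2) + (z.2 - z.1/2) = (z.1+z.2)/2 by ring, hsinp] at e
          rw [e]; ring
        have key2 : Complex.cos (3*((z.1-z.2)/2))
            = Complex.cos (z.1 - z.2/2) * Complex.cos (z.2 - z.1/2) := by
          have e := Complex.cos_sub (z.1 - z.2/2) (z.2 - z.1/2)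
          rw [show (z.1 - z.2/2) - (z.2 - z.1/2) = 3*((z.1-z.2)/2) by ring, hsinp] at e
          rw [e]; ring
        have cube : 4*(Complex.cos ((z.1-z.2)/2))^3 - 3*(Complex.cos ((z.1-z.2)/2))
            = Complex.cos (z.1 - z.2/2) * Complex.cos (z.2 - z.1/2) := by
          rw [← Complex.cos_three_mul]; exact key2
        have sumform : Complex.cos z.1 + Complex.cos z.2 + Complex.cos (z.1 - z.2)
            = 2 * Complex.cos ((z.1+z.2)/2) * Complex.cos ((z.1-z.2)/2)
              + 2 * (Complex.cos ((z.1-z.2)/2))^2 - 1 := by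
          have e := fermi_sum ((z.1+z.2)/2) ((z.1-z.2)/2)
          rw [show (z.1+z.2)/2 + (z.1-z.2)/2 = z.1 by ring,
            show (z.1+z.2)/2 - (z.1-z.2)/2 = z.2 by ring] at e
          exact e
        set x := Complex.cos ((z.1-z.2)/2) with hx
        set ε := Complex.cos (z.1 - z.2/2) * Complex.cos (z.2 - z.1/2) with hεdef
        have hε2 : ε^2 = 1 := by
          rw [hεdef]
          rw [show (Complex.cos (z.1 - z.2/2) * Complex.cos (z.2 - z.1/2))^2
            = (Complex.cos (z.1 - z.2/2))^2 * (Complex.cos (z.2 - z.1/2))^2 by ring, hcp2, hcq2]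
          norm_num
        have hsum : Complex.cos z.1 + Complex.cos z.2 + Complex.cos (z.1 - z.2)
            = 2*ε*x + 2*x^2 - 1 := by rw [sumform, key1]
        have hcube : 4*x^3 - 3*x = ε := cube
        have hεcases : ε = 1 ∨ ε = -1 := by
          have : (ε - 1)*(ε + 1) = 0 := by linear_combination hε2
          rcases mul_eq_zero.mp this with h | h
          · left; linear_combination h
          · right; linear_combination h
        rcases hεcases with hε | hε
        · have fact : (x - 1)*(2*x+1)^2 = 0 := by
            rw [hε] at hcube; linear_combination hcube
          rcases mul_eq_zero.mp fact with hx1 | hx2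
          · have hxv : x = 1 := by linear_combination hx1
            apply hCne3; apply sum_ne
            rw [hsum, hε, hxv]; push_cast; ring
          · have hxv : x = -1/2 := by
              have := pow_eq_zero_iff (n := 2) (by norm_num) |>.mp hx2
              linear_combination this/2
            apply hCne32; apply sum_ne
            rw [hsum, hε, hxv]; push_cast; ring
        · have fact : (x + 1)*(2*x-1)^2 = 0 := by
            rw [hε] at hcube; linear_combination hcube
          rcases mul_eq_zero.mp fact with hx1 | hx2
          · have hxv : x = -1 := by linear_combination hx1
            apply hCne3; apply sum_ne
            rw [hsum, hε, hxv]; push_cast; ring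
          · have hxv : x = 1/2 := by
              have := pow_eq_zero_iff (n := 2) (by norm_num) |>.mp hx2
              linear_combination this/2
            apply hCne32; apply sum_ne
            rw [hsum, hε, hxv]; push_cast; ring
  · rcases mul_eq_zero.mp f2 with f2' | hsinq2
    · rcases mul_eq_zero.mp f2' with h20 | hcosP
      · exact two_ne_zero h20
      · -- CASE i : cos (z₂/2) = 0 ∧ cos (z₁/2) = 0
        obtain ⟨hc2, hs2⟩ := half_cos z.2 hcosq
        obtain ⟨hc1, hs1⟩ := half_cos z.1 hcosP
        apply hCne1; apply sum_ne
        rw [Complex.cos_sub, hc1, hc2, hs1, hs2]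
        push_cast; ring
    · -- CASE ii : cos (z₂/2) = 0 ∧ sin (z₂ - z₁/2) = 0
      obtain ⟨hc2, hs2⟩ := half_cos z.2 hcosq
      have hs1half : Complex.sin (z.1/2) = 0 := by
        have e := Complex.sin_sub z.2 (z.1/2)
        rw [hs2, hc2] at e
        rw [e] at hsinq2
        simpa using hsinq2
      obtain ⟨hc1, hs1⟩ := half_sin z.1 hs1half
      apply hCne1; apply sum_ne
      rw [Complex.cos_sub, hc1, hc2, hs1, hs2]
      push_cast; ring


lemma quad_iden (p q : ℂ) :
    Complex.cos (2*p) + Complex.cos (2*q) + Complex.cos (2*p - 2*q) + 1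
      = 4 * Complex.cos p * Complex.cos q * Complex.cos (p - q) := by
  rw [Complex.cos_two_mul, Complex.cos_two_mul, show 2*p-2*q = 2*(p-q) by ring,
    Complex.cos_two_mul, Complex.cos_sub]
  linear_combination (2*(Complex.sin q)^2) * (Complex.sin_sq_add_cos_sq p)
    + (2 - 2*(Complex.cos p)^2) * (Complex.sin_sq_add_cos_sq q)

lemma surface_iff_mu0 (lam : ℝ) (h19 : lam^2 = 1/9) (z : ℂ × ℂ) :
    z ∈ hexFermiC lam ↔
      Complex.cos (z.1/2) * Complex.cos (z.2/2) * Complex.cos ((z.1-z.2)/2) = 0 := by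
  have hC : (((3 / 2 : ℝ) * (3 * lam ^ 2 - 1) : ℝ) : ℂ) = -1 := by
    rw [h19]; norm_num
  have iden := quad_iden (z.1/2) (z.2/2)
  rw [show 2*(z.1/2) = z.1 by ring, show 2*(z.2/2) = z.2 by ring,

    show z.1/2 - z.2/2 = (z.1-z.2)/2 by ring] at iden
  constructor
  · intro hz
    have hz' : Complex.cos z.1 + Complex.cos z.2 + Complex.cos (z.1 - z.2) = -1 := by
      have hz2 : Complex.cos z.1 + Complex.cos z.2 + Complex.cos (z.1 - z.2)
          = (((3 / 2 : ℝ) * (3 * lam ^ 2 - 1) : ℝ) : ℂ) := hz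
      rw [hz2, hC]
    have h4 : 4 * Complex.cos (z.1/2) * Complex.cos (z.2/2) * Complex.cos ((z.1-z.2)/2) = 0 := by
      rw [← iden, hz']; ring
    have := mul_eq_zero.mp (show (4:ℂ) * (Complex.cos (z.1/2) * Complex.cos (z.2/2) * Complex.cos ((z.1-z.2)/2)) = 0 by rw [← h4]; ring)
    rcases this with h | h
    · exact absurd h (by norm_num)
    · exact h
  · intro hp
    show Complex.cos z.1 + Complex.cos z.2 + Complex.cos (z.1 - z.2)
        = (((3 / 2 : ℝ) * (3 * lam ^ 2 - 1) : ℝ) : ℂ)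
    rw [hC]
    have : Complex.cos z.1 + Complex.cos z.2 + Complex.cos (z.1 - z.2) + 1 = 0 := by
      rw [iden, show 4 * Complex.cos (z.1/2) * Complex.cos (z.2/2) * Complex.cos ((z.1-z.2)/2) = 4 * (Complex.cos (z.1/2) * Complex.cos (z.2/2) * Complex.cos ((z.1-z.2)/2)) by ring, hp]
      ring
    linear_combination this


lemma cos_half_zero (w : ℂ) (h : Complex.cos (w/2) = 0) :
    Complex.cos w = -1 ∧ Complex.sin w = 0 := by
  constructor
  · rw [show w = 2*(w/2) by ring, Complex.cos_two_mul, h]; ring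
  · rw [show w = 2*(w/2) by ring, Complex.sin_two_mul, h]; ring

lemma cos_half_zero_im (w : ℂ) (h : Complex.cos (w/2) = 0) : w.im = 0 := by
  obtain ⟨k, hk⟩ := Complex.cos_eq_zero_iff.mp h
  have hw : w = (2*(k:ℂ)+1)*(π:ℝ) := by linear_combination 2*hk
  rw [hw]
  simp [Complex.mul_im, Complex.add_im, Complex.add_re, Complex.ofReal_im,
    Complex.ofReal_re, Complex.intCast_im, Complex.intCast_re]

lemma sin_ne_of_im_ne (w : ℂ) (h : w.im ≠ 0) : Complex.sin w ≠ 0 := by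
  intro hs
  obtain ⟨k, hk⟩ := Complex.sin_eq_zero_iff.mp hs
  apply h
  rw [hk]
  simp [Complex.mul_im, Complex.intCast_im, Complex.intCast_re, Complex.ofReal_im]

lemma exists_delta (x : ℝ) : ∃ δ : ℝ, Real.sin (x + δ) ≠ 0 := by
  by_cases h : Real.sin x = 0
  · refine ⟨π/2, ?_⟩
    rw [Real.sin_add_pi_div_two]
    intro hc
    have := Real.sin_sq_add_cos_sq x
    rw [h, hc] at this
    norm_num at this
  · exact ⟨0, by rwa [add_zero]⟩

lemma ofReal_sin_ne (x : ℝ) (h : Real.sin x ≠ 0) : Complex.sin ((x:ℝ):ℂ) ≠ 0 := by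
  rw [← Complex.ofReal_sin]
  exact_mod_cast h

/-- the freely-moving coordinate path. -/
lemma free_cont (x y δ : ℝ) :
    Continuous (fun t : ℝ => ((x + t*δ : ℝ) : ℂ) + (((1-t)*y : ℝ) : ℂ)*I) := by
  apply Continuous.add
  · exact Complex.continuous_ofReal.comp (by continuity)
  · exact (Complex.continuous_ofReal.comp (by continuity)).mul continuous_const

lemma free_im (x y δ : ℝ) (t : ℝ) :
    (((x + t*δ : ℝ) : ℂ) + (((1-t)*y : ℝ) : ℂ)*I).im = (1-t)*y := by
  simp

lemma free_zero (w : ℂ) (δ : ℝ) :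
    ((w.re + 0*δ : ℝ) : ℂ) + (((1-0)*w.im : ℝ) : ℂ)*I = w := by
  push_cast
  simpa using Complex.re_add_im w

lemma free_sin_ne (x y δ : ℝ) (hy : y ≠ 0) (hδ : Real.sin (x + δ) ≠ 0)
    (t : ℝ) (ht : t ∈ Set.Icc (0:ℝ) 1) :
    Complex.sin (((x + t*δ : ℝ) : ℂ) + (((1-t)*y : ℝ) : ℂ)*I) ≠ 0 := by
  rcases eq_or_lt_of_le ht.2 with h1 | h1
  · rw [h1]
    have : ((x + 1*δ : ℝ) : ℂ) + (((1-1)*y : ℝ) : ℂ)*I = ((x + δ : ℝ) : ℂ) := by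
      push_cast; ring
    rw [this]
    exact ofReal_sin_ne _ hδ
  · apply sin_ne_of_im_ne
    rw [free_im]
    have : 0 < 1 - t := by linarith
    exact mul_ne_zero (by linarith) hy

lemma mu0_case (lam a : ℝ) (h19 : lam^2 = 1/9) (z₀ : ℂ × ℂ)
    (hreg : z₀ ∈ hexFermiReg lam) (hstrip : z₀ ∈ hexStrip a)
    (hnotreal : ¬ (z₀.1.im = 0 ∧ z₀.2.im = 0)) :
    ∃ c : ℝ → ℂ × ℂ, ContinuousOn c (Set.Icc 0 1) ∧ c 0 = z₀ ∧
      (∀ t ∈ Set.Icc (0:ℝ) 1, c t ∈ hexFermiReg lam ∩ hexStrip a) ∧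
      (c 1).1.im = 0 ∧ (c 1).2.im = 0 := by
  have hsurf := hreg.1
  have hstrip' : z₀.1.im ^ 2 + z₀.2.im ^ 2 < a ^ 2 := hstrip
  rcases mul_eq_zero.mp ((surface_iff_mu0 lam h19 z₀).mp hsurf) with h12 | h3
  · rcases mul_eq_zero.mp h12 with h1 | h2
    · -- branch 1 : cos (z₁/2) = 0, z₁ real, move z₂
      obtain ⟨hc1, hs1⟩ := cos_half_zero _ h1
      have him1 : z₀.1.im = 0 := cos_half_zero_im _ h1
      have him2 : z₀.2.im ≠ 0 := fun h => hnotreal ⟨him1, h⟩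
      obtain ⟨δ, hδ⟩ := exists_delta z₀.2.re
      refine ⟨fun t => (z₀.1, ((z₀.2.re + t*δ : ℝ) : ℂ) + (((1-t)*z₀.2.im : ℝ) : ℂ)*I), ?_, ?_, ?_, ?_, ?_⟩
      · exact (continuous_const.prodMk (free_cont _ _ _)).continuousOn
      · simp only []
        rw [free_zero]
      · intro t ht
        have hsin2 : Complex.sin (((z₀.2.re + t*δ : ℝ) : ℂ) + (((1-t)*z₀.2.im : ℝ) : ℂ)*I) ≠ 0 :=
          free_sin_ne _ _ _ him2 hδ t ht
        refine ⟨⟨?_, ?_⟩, ?_⟩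
        · apply (surface_iff_mu0 lam h19 _).mpr
          simp only []
          rw [h1]
          ring
        · left
          simp only []
          rw [Complex.sin_sub, hs1, hc1]
          simpa using hsin2
        · show z₀.1.im ^ 2 + _ ^ 2 < a ^ 2
          rw [free_im, him1]
          have := ht.1; have := ht.2
          nlinarith [sq_nonneg z₀.2.im, sq_nonneg ((1-t)*z₀.2.im), sq_nonneg t, sq_nonneg (t*z₀.2.im)]
      · exact him1
      · rw [free_im]; ring
    · -- branch 2 : cos (z₂/2) = 0, z₂ real, move z₁
      obtain ⟨hc2, hs2⟩ := cos_half_zero _ h2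
      have him2 : z₀.2.im = 0 := cos_half_zero_im _ h2
      have him1 : z₀.1.im ≠ 0 := fun h => hnotreal ⟨h, him2⟩
      obtain ⟨δ, hδ⟩ := exists_delta z₀.1.re
      refine ⟨fun t => (((z₀.1.re + t*δ : ℝ) : ℂ) + (((1-t)*z₀.1.im : ℝ) : ℂ)*I, z₀.2), ?_, ?_, ?_, ?_, ?_⟩
      · exact ((free_cont _ _ _).prodMk continuous_const).continuousOn
      · simp only []
        rw [free_zero]
      · intro t ht
        have hsin1 : Complex.sin (((z₀.1.re + t*δ : ℝ) : ℂ) + (((1-t)*z₀.1.im : ℝ) : ℂ)*I) ≠ 0 :=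
          free_sin_ne _ _ _ him1 hδ t ht
        refine ⟨⟨?_, ?_⟩, ?_⟩
        · apply (surface_iff_mu0 lam h19 _).mpr
          simp only []
          rw [h2]
          ring
        · right
          simp only []
          rw [Complex.sin_sub, hs2, hc2]
          simpa using hsin1
        · show _ ^ 2 + z₀.2.im ^ 2 < a ^ 2
          rw [free_im, him2]
          have := ht.1; have := ht.2
          nlinarith [sq_nonneg z₀.1.im, sq_nonneg ((1-t)*z₀.1.im), sq_nonneg t, sq_nonneg (t*z₀.1.im)]
      · rw [free_im]; ring
      · exact him2
  · -- branch 3 : cos ((z₁-z₂)/2) = 0, z₁ - z₂ real, move both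
    obtain ⟨hc3, hs3⟩ := cos_half_zero _ h3
    have himd : (z₀.1 - z₀.2).im = 0 := cos_half_zero_im _ h3
    have him12 : z₀.2.im = z₀.1.im := by
      have : z₀.1.im - z₀.2.im = 0 := by rw [← Complex.sub_im]; exact himd
      linarith
    have him1 : z₀.1.im ≠ 0 := by
      intro h; exact hnotreal ⟨h, by rw [him12, h]⟩
    obtain ⟨δ, hδ⟩ := exists_delta z₀.1.re
    refine ⟨fun t => (((z₀.1.re + t*δ : ℝ) : ℂ) + (((1-t)*z₀.1.im : ℝ) : ℂ)*I,
      (((z₀.1.re + t*δ : ℝ) : ℂ) + (((1-t)*z₀.1.im : ℝ) : ℂ)*I) - (z₀.1 - z₀.2)), ?_, ?_, ?_, ?_, ?_⟩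
    · exact ((free_cont _ _ _).prodMk ((free_cont _ _ _).sub continuous_const)).continuousOn
    · simp only []
      rw [free_zero]
      exact Prod.ext rfl (by ring)
    · intro t ht
      have hsin1 : Complex.sin (((z₀.1.re + t*δ : ℝ) : ℂ) + (((1-t)*z₀.1.im : ℝ) : ℂ)*I) ≠ 0 :=
        free_sin_ne _ _ _ him1 hδ t ht
      have hdiff : (((z₀.1.re + t*δ : ℝ) : ℂ) + (((1-t)*z₀.1.im : ℝ) : ℂ)*I)
          - ((((z₀.1.re + t*δ : ℝ) : ℂ) + (((1-t)*z₀.1.im : ℝ) : ℂ)*I) - (z₀.1 - z₀.2))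
          = z₀.1 - z₀.2 := by ring
      refine ⟨⟨?_, ?_⟩, ?_⟩
      · apply (surface_iff_mu0 lam h19 _).mpr
        simp only []
        rw [hdiff, h3]
        ring
      · left
        simp only []
        rw [hdiff, hs3]
        simpa using hsin1
      · show _ ^ 2 + _ ^ 2 < a ^ 2
        simp only [Complex.sub_im, free_im, himd, sub_zero]
        rw [him12] at hstrip'
        have := ht.1; have := ht.2
        nlinarith [sq_nonneg z₀.1.im, sq_nonneg ((1-t)*z₀.1.im), sq_nonneg t, sq_nonneg (t*z₀.1.im)]
    · rw [free_im]; ring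
    · simp only [Complex.sub_im, free_im, himd, sub_zero]
      ring





lemma prodIm (a b : ℝ) :
    ((a:ℂ) + (b:ℂ)*I)*((a:ℂ) - (b:ℂ)*I) = ((a^2+b^2 : ℝ):ℂ) := by
  push_cast
  linear_combination (-(b:ℂ)^2) * Complex.I_sq

lemma cos_shift_eq (x y : ℂ) (h : Complex.cos x = Complex.cos y) :
    ∃ (ε δ : ℂ), (ε = 1 ∨ ε = -1) ∧ δ.im = 0 ∧
      (∀ w : ℂ, Complex.cos (ε*w + δ) = Complex.cos w) ∧ x = ε*y + δ := by
  obtain ⟨k, hk⟩ := Complex.cos_eq_cos_iff.mp h.symm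
  have hδim : ((2:ℂ) * (k:ℂ) * (π:ℝ)).im = 0 := by
    simp [Complex.mul_im, Complex.mul_re, Complex.intCast_im, Complex.intCast_re]
  have hsin : Complex.sin ((2:ℂ) * (k:ℂ) * (π:ℝ)) = 0 := by
    apply Complex.sin_eq_zero_iff.mpr
    exact ⟨2*k, by push_cast; ring⟩
  have hcos : Complex.cos ((2:ℂ) * (k:ℂ) * (π:ℝ)) = 1 := by
    have := Complex.cos_int_mul_two_pi k
    rw [show ((k:ℂ) * (2 * (π:ℝ))) = (2:ℂ) * (k:ℂ) * (π:ℝ) by ring] at this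
    exact this
  rcases hk with hk | hk
  · refine ⟨1, (2:ℂ) * (k:ℂ) * (π:ℝ), Or.inl rfl, hδim, ?_, by rw [hk]; ring⟩
    intro w
    rw [one_mul, add_comm, Complex.cos_add, hcos, hsin]
    ring
  · refine ⟨-1, (2:ℂ) * (k:ℂ) * (π:ℝ), Or.inr rfl, hδim, ?_, by rw [hk]; ring⟩
    intro w
    rw [show (-1:ℂ)*w + (2:ℂ) * (k:ℂ) * (π:ℝ) = (2:ℂ) * (k:ℂ) * (π:ℝ) - w by ring,
      Complex.cos_sub, hcos, hsin]
    ring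


set_option maxHeartbeats 4000000 in
lemma main_case (lam a : ℝ) (hl1 : lam^2 < 1) (hl0 : lam ≠ 0) (hl19 : lam^2 ≠ 1/9)
    (z₀ : ℂ × ℂ) (hsurf : z₀ ∈ hexFermiC lam) (hstrip : z₀ ∈ hexStrip a) :
    ∃ c : ℝ → ℂ × ℂ, ContinuousOn c (Set.Icc 0 1) ∧ c 0 = z₀ ∧
      (∀ t ∈ Set.Icc (0:ℝ) 1, c t ∈ hexFermiC lam ∩ hexStrip a) ∧
      (c 1).1.im = 0 ∧ (c 1).2.im = 0 := by
  have hl2pos : 0 < lam^2 :=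
    lt_of_le_of_ne (sq_nonneg lam) (Ne.symm (pow_ne_zero 2 hl0))
  -- the constant μ
  obtain ⟨μ, hμdef⟩ : ∃ x : ℝ, x = (3/2*(3*lam^2-1) + 1)/2 := ⟨_, rfl⟩
  have hμlow : -(1:ℝ)/4 < μ := by rw [hμdef]; nlinarith
  have hμhigh : μ < 2 := by rw [hμdef]; nlinarith
  have hμ0 : μ ≠ 0 := by
    rw [hμdef]; intro h; apply hl19; nlinarith
  -- ζ-coordinates of the initial point
  obtain ⟨η1z, hη1zdef⟩ : ∃ x : ℂ, x = Complex.cos ((z₀.1 + z₀.2)/2) := ⟨_, rfl⟩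
  obtain ⟨η2z, hη2zdef⟩ : ∃ x : ℂ, x = Complex.cos ((z₀.1 - z₀.2)/2) := ⟨_, rfl⟩
  have hsum : 2*η1z*η2z + 2*η2z^2 - 1 = (((3/2*(3*lam^2-1) : ℝ)) : ℂ) := by
    have e := fermi_sum ((z₀.1+z₀.2)/2) ((z₀.1-z₀.2)/2)
    rw [show (z₀.1+z₀.2)/2 + (z₀.1-z₀.2)/2 = z₀.1 by ring,
      show (z₀.1+z₀.2)/2 - (z₀.1-z₀.2)/2 = z₀.2 by ring] at e
    rw [hη1zdef, hη2zdef, ← e]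
    exact hsurf
  have heq : η2z * (η1z + η2z) = ((μ:ℝ):ℂ) := by
    rw [hμdef]; push_cast at hsum ⊢; linear_combination hsum/2
  have hη2z0 : η2z ≠ 0 := by
    intro h
    rw [h] at heq
    simp only [zero_mul] at heq
    exact hμ0 (by exact_mod_cast heq.symm)
  -- polar data
  obtain ⟨r, hrdef⟩ : ∃ x : ℝ, x = ‖η2z‖ := ⟨_, rfl⟩
  have hr : 0 < r := by rw [hrdef]; exact norm_pos_iff.mpr hη2z0
  obtain ⟨c₀, hc₀def⟩ : ∃ x : ℝ, x = η2z.re / r := ⟨_, rfl⟩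
  have habs2 : η2z.re^2 + η2z.im^2 = r^2 := by
    rw [hrdef, Complex.sq_norm, Complex.normSq_apply]; ring
  have hc₀w : c₀^2 + (η2z.im/r)^2 = 1 := by
    rw [hc₀def]
    field_simp
    linarith
  have hc₀1 : c₀^2 ≤ 1 := by nlinarith [sq_nonneg (η2z.im/r)]
  obtain ⟨s, hsdef⟩ : ∃ x : ℝ, x = if 0 ≤ η2z.im then (1:ℝ) else -1 := ⟨_, rfl⟩
  have hs2 : s^2 = 1 := by rw [hsdef]; split_ifs <;> norm_num
  have hsw₀ : s * Real.sqrt (1 - c₀^2) = η2z.im / r := by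
    have h1c : 1 - c₀^2 = (η2z.im/r)^2 := by linarith
    rw [h1c, Real.sqrt_sq_eq_abs, hsdef]
    split_ifs with him
    · rw [one_mul, _root_.abs_of_nonneg (div_nonneg him hr.le)]
    · rw [_root_.abs_of_nonpos (div_nonpos_of_nonpos_of_nonneg (by linarith) hr.le)]
      ring
  obtain ⟨d, hddef⟩ : ∃ x : ℝ, x = if 0 ≤ c₀ then (1:ℝ) else -1 := ⟨_, rfl⟩
  have hd2 : d^2 = 1 := by rw [hddef]; split_ifs <;> norm_num
  have habsd : |d| = 1 := by rw [hddef]; split_ifs <;> norm_num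
  obtain ⟨rs, hrsdef⟩ : ∃ x : ℝ, x = if 0 < μ then (1:ℝ) else Real.sqrt (-μ) := ⟨_, rfl⟩
  have hμneg_of : ¬ 0 < μ → μ < 0 := fun h => lt_of_le_of_ne (not_lt.mp h) hμ0
  have hrs0 : 0 < rs := by
    rw [hrsdef]; split_ifs with h
    · norm_num
    · exact Real.sqrt_pos.mpr (by linarith [hμneg_of h])
  have hrs1 : rs ≤ 1 := by
    rw [hrsdef]; split_ifs with h
    · exact le_refl 1
    · exact Real.sqrt_le_one.mpr (by linarith [hμneg_of h])
  have hcase : (0 < μ ∧ μ < 2 ∧ rs = 1) ∨ (μ < 0 ∧ rs^2 = -μ ∧ 0 < rs) := by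
    rw [hrsdef]; split_ifs with h
    · exact Or.inl ⟨h, hμhigh, rfl⟩
    · exact Or.inr ⟨hμneg_of h, Real.sq_sqrt (by linarith [hμneg_of h]), Real.sqrt_pos.mpr (by linarith [hμneg_of h])⟩
  -- time reparametrizations
  obtain ⟨u, hudef⟩ : ∃ x : ℝ → ℝ, x = fun t => min (max (2*t) 0) 1 := ⟨_, rfl⟩
  obtain ⟨v, hvdef⟩ : ∃ x : ℝ → ℝ, x = fun t => max (min (2*t - 1) 1) 0 := ⟨_, rfl⟩
  have hu01 : ∀ t, 0 ≤ u t ∧ u t ≤ 1 := by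
    intro t; rw [hudef]
    exact ⟨le_min (le_max_right _ _) zero_le_one, min_le_right _ _⟩
  have hv01 : ∀ t, 0 ≤ v t ∧ v t ≤ 1 := by
    intro t; rw [hvdef]
    exact ⟨le_max_right _ _, max_le (min_le_right _ _) zero_le_one⟩
  have hu0 : u 0 = 0 := by rw [hudef]; norm_num
  have hv0 : v 0 = 0 := by rw [hvdef]; norm_num
  have hu_half : ∀ t : ℝ, 1/2 ≤ t → u t = 1 := by
    intro t ht; rw [hudef]
    simp only []
    rw [max_eq_left (by linarith : (0:ℝ) ≤ 2*t), min_eq_right (by linarith : (1:ℝ) ≤ 2*t)]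
  have hv_half : ∀ t : ℝ, t ≤ 1/2 → v t = 0 := by
    intro t ht; rw [hvdef]
    simp only []
    rw [min_eq_left (by linarith : 2*t - 1 ≤ 1), max_eq_right (by linarith : 2*t - 1 ≤ 0)]
  have hv1 : v 1 = 1 := by rw [hvdef]; norm_num
  have hucont : Continuous u := by
    rw [hudef]
    exact ((continuous_const.mul continuous_id).max continuous_const).min continuous_const
  have hvcont : Continuous v := by
    rw [hvdef]
    exact (((continuous_const.mul continuous_id).sub continuous_const).min continuous_const).max continuous_const
  -- geometric path data
  obtain ⟨cc, hccdef⟩ : ∃ x : ℝ → ℝ, x = fun t => c₀ + u t * (d - c₀) := ⟨_, rfl⟩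
  obtain ⟨ρ, hρdef⟩ : ∃ x : ℝ → ℝ, x = fun t => r + v t * (rs - r) := ⟨_, rfl⟩
  have hcc0 : cc 0 = c₀ := by rw [hccdef]; simp [hu0]
  have hρ0 : ρ 0 = r := by rw [hρdef]; simp [hv0]
  have hcc_half : ∀ t : ℝ, 1/2 ≤ t → cc t = d := by
    intro t ht; rw [hccdef]; simp only [hu_half t ht]; ring
  have hρ_half : ∀ t : ℝ, t ≤ 1/2 → ρ t = r := by
    intro t ht; rw [hρdef]; simp only [hv_half t ht]; ring
  have hρ1 : ρ 1 = rs := by rw [hρdef]; simp only [hv1]; ring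
  have hccfacts : ∀ t, c₀^2 ≤ (cc t)^2 ∧ (cc t)^2 ≤ 1 := by
    intro t
    obtain ⟨hu0', hu1'⟩ := hu01 t
    have hm1 : -1 ≤ c₀ := by nlinarith
    have hp1 : c₀ ≤ 1 := by nlinarith
    have hcct : cc t = c₀ + u t * (d - c₀) := by rw [hccdef]
    by_cases hc0s : 0 ≤ c₀
    · have hdd : d = 1 := by rw [hddef, if_pos hc0s]
      rw [hcct, hdd]
      constructor
      · nlinarith [mul_nonneg hu0' (by linarith : (0:ℝ) ≤ 1 - c₀)]
      · nlinarith [mul_nonneg hu0' (by linarith : (0:ℝ) ≤ 1 - c₀),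
          mul_nonneg (by linarith : (0:ℝ) ≤ 1 - u t) (by linarith : (0:ℝ) ≤ 1 - c₀)]
    · have hdd : d = -1 := by rw [hddef, if_neg hc0s]
      push_neg at hc0s
      rw [hcct, hdd]
      constructor
      · nlinarith [mul_nonneg hu0' (by linarith : (0:ℝ) ≤ c₀ + 1)]
      · nlinarith [mul_nonneg hu0' (by linarith : (0:ℝ) ≤ c₀ + 1),
          mul_nonneg (by linarith : (0:ℝ) ≤ 1 - u t) (by linarith : (0:ℝ) ≤ c₀ + 1)]
  have hcccont : Continuous cc := by
    rw [hccdef]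
    exact continuous_const.add (hucont.mul continuous_const)
  have hρcont : Continuous ρ := by
    rw [hρdef]
    exact continuous_const.add (hvcont.mul continuous_const)
  have hρlo : ∀ t, min r rs ≤ ρ t := by
    intro t
    obtain ⟨hv0', hv1'⟩ := hv01 t
    rw [hρdef]
    simp only []
    rcases le_total r rs with hc | hc
    · rw [min_eq_left hc]; nlinarith
    · rw [min_eq_right hc]; nlinarith
  have hρhi : ∀ t, ρ t ≤ max r rs := by
    intro t
    obtain ⟨hv0', hv1'⟩ := hv01 t
    rw [hρdef]
    simp only []
    rcases le_total r rs with hc | hc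
    · rw [max_eq_right hc]; nlinarith
    · rw [max_eq_left hc]; nlinarith
  have hρpos : ∀ t, 0 < ρ t := fun t => lt_of_lt_of_le (lt_min hr hrs0) (hρlo t)
  -- the η-paths
  set η2f : ℝ → ℂ := fun t =>
    ((ρ t : ℝ):ℂ) * (((cc t : ℝ):ℂ) + ((s * Real.sqrt (1 - (cc t)^2) : ℝ):ℂ) * I) with hη2fdef
  set η1f : ℝ → ℂ := fun t =>
    ((μ / ρ t : ℝ):ℂ) * (((cc t : ℝ):ℂ) - ((s * Real.sqrt (1 - (cc t)^2) : ℝ):ℂ) * I) - η2f t with hη1fdef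
  have hwsq : ∀ t, (Real.sqrt (1 - (cc t)^2))^2 = 1 - (cc t)^2 := by
    intro t
    exact Real.sq_sqrt (by linarith [(hccfacts t).2])
  have hunit : ∀ t, (((cc t : ℝ):ℂ) + ((s * Real.sqrt (1 - (cc t)^2) : ℝ):ℂ) * I)
      * (((cc t : ℝ):ℂ) - ((s * Real.sqrt (1 - (cc t)^2) : ℝ):ℂ) * I) = 1 := by
    intro t
    rw [prodIm]
    have : (cc t)^2 + (s * Real.sqrt (1 - (cc t)^2))^2 = 1 := by
      rw [mul_pow, hwsq t]
      nlinarith [hs2]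
    rw [this]
    norm_num
  have hprod : ∀ t, η2f t * (η1f t + η2f t) = ((μ:ℝ):ℂ) := by
    intro t
    have e1 : η1f t + η2f t
        = ((μ / ρ t : ℝ):ℂ) * (((cc t : ℝ):ℂ) - ((s * Real.sqrt (1 - (cc t)^2) : ℝ):ℂ) * I) := by
      rw [hη1fdef]; ring
    rw [e1, hη2fdef]
    simp only []
    calc ((ρ t : ℝ):ℂ) * (((cc t : ℝ):ℂ) + ((s * Real.sqrt (1 - (cc t)^2) : ℝ):ℂ) * I)
          * (((μ / ρ t : ℝ):ℂ) * (((cc t : ℝ):ℂ) - ((s * Real.sqrt (1 - (cc t)^2) : ℝ):ℂ) * I))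
        = ((ρ t : ℝ):ℂ) * ((μ / ρ t : ℝ):ℂ)
          * ((((cc t : ℝ):ℂ) + ((s * Real.sqrt (1 - (cc t)^2) : ℝ):ℂ) * I)
            * (((cc t : ℝ):ℂ) - ((s * Real.sqrt (1 - (cc t)^2) : ℝ):ℂ) * I)) := by ring
      _ = ((ρ t : ℝ):ℂ) * ((μ / ρ t : ℝ):ℂ) := by rw [hunit t]; ring
      _ = ((μ:ℝ):ℂ) := by
          rw [← Complex.ofReal_mul]
          congr 1
          rw [mul_comm]
          exact div_mul_cancel₀ μ (ne_of_gt (hρpos t))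
  -- imaginary parts of the η-paths
  have him2f : ∀ t, (η2f t).im = ρ t * (s * Real.sqrt (1 - (cc t)^2)) := by
    intro t
    rw [hη2fdef]
    simp [Complex.mul_im, Complex.add_im, Complex.add_re]
  have him1f : ∀ t, (η1f t).im = -(s*(μ/ρ t + ρ t)) * Real.sqrt (1 - (cc t)^2) := by
    intro t
    rw [hη1fdef, hη2fdef]
    simp [Complex.mul_im, Complex.add_im, Complex.add_re, Complex.sub_im]
    ring
  have hwnn : ∀ t, 0 ≤ Real.sqrt (1 - (cc t)^2) := fun t => Real.sqrt_nonneg _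
  -- continuity of the η-paths
  have hη2fcont : Continuous η2f := by
    rw [hη2fdef]
    apply Continuous.mul
    · exact Complex.continuous_ofReal.comp hρcont
    · apply Continuous.add
      · exact Complex.continuous_ofReal.comp hcccont
      · apply Continuous.mul _ continuous_const
        apply Complex.continuous_ofReal.comp
        apply Continuous.mul continuous_const
        exact Real.continuous_sqrt.comp (continuous_const.sub (hcccont.pow 2))
  have hη1fcont : Continuous η1f := by
    rw [hη1fdef]
    apply Continuous.sub _ hη2fcont
    apply Continuous.mul
    · apply Complex.continuous_ofReal.comp
      exact continuous_const.div hρcont (fun t => ne_of_gt (hρpos t))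
    · apply Continuous.sub
      · exact Complex.continuous_ofReal.comp hcccont
      · apply Continuous.mul _ continuous_const
        apply Complex.continuous_ofReal.comp
        apply Continuous.mul continuous_const
        exact Real.continuous_sqrt.comp (continuous_const.sub (hcccont.pow 2))
  -- the lifted paths
  obtain ⟨M2, hM2def⟩ : ∃ x : ℝ → ℂ, x = fun t => if 0 ≤ η2z.im then (starRingEnd ℂ) (zetaL (η2f t)) else zetaL (η2f t) := ⟨_, rfl⟩
  obtain ⟨M1, hM1def⟩ : ∃ x : ℝ → ℂ, x = fun t => if 0 ≤ -(s*(μ/r + r)) then (starRingEnd ℂ) (zetaL (η1f t)) else zetaL (η1f t) := ⟨_, rfl⟩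
  have hcosM2 : ∀ t, Complex.cos (M2 t) = η2f t := by
    intro t
    rw [hM2def]
    simp only []
    split_ifs with him
    · apply cos_conj_zetaL_of_im_nonneg
      rw [him2f t]
      have hs1 : s = 1 := by rw [hsdef, if_pos him]
      rw [hs1, one_mul]
      exact mul_nonneg (hρpos t).le (hwnn t)
    · apply cos_zetaL_of_im_nonpos
      rw [him2f t]
      have hs1 : s = -1 := by rw [hsdef, if_neg him]
      rw [hs1]
      have := mul_nonneg (hρpos t).le (hwnn t)
      nlinarith
  have hcosM1 : ∀ t, Complex.cos (M1 t) = η1f t := by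
    intro t
    rw [hM1def]
    simp only []
    rcases le_total t (1/2 : ℝ) with ht | ht
    · have hρt : ρ t = r := hρ_half t ht
      split_ifs with hflag
      · apply cos_conj_zetaL_of_im_nonneg
        rw [him1f t, hρt]
        exact mul_nonneg hflag (hwnn t)
      · apply cos_zetaL_of_im_nonpos
        rw [him1f t, hρt]
        push_neg at hflag
        exact mul_nonpos_of_nonpos_of_nonneg hflag.le (hwnn t)
    · have hw0 : Real.sqrt (1 - (cc t)^2) = 0 := by
        rw [hcc_half t ht]
        rw [show 1 - d^2 = 0 by rw [hd2]; ring]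
        exact Real.sqrt_zero
      have him0 : (η1f t).im = 0 := by rw [him1f t, hw0]; ring
      split_ifs with hflag
      · exact cos_conj_zetaL_of_im_nonneg (by rw [him0])
      · exact cos_zetaL_of_im_nonpos (by rw [him0])
  have hM2imsq : ∀ t, ((M2 t).im)^2 = (acoshR (EpC (η2f t)))^2 := by
    intro t
    rw [hM2def]
    simp only []
    split_ifs
    · rw [Complex.conj_im, zetaL_im]; ring
    · rw [zetaL_im]
  have hM1imsq : ∀ t, ((M1 t).im)^2 = (acoshR (EpC (η1f t)))^2 := by
    intro t
    rw [hM1def]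
    simp only []
    split_ifs
    · rw [Complex.conj_im, zetaL_im]; ring
    · rw [zetaL_im]
  have hM2cont : Continuous M2 := by
    rw [hM2def]
    split_ifs
    · exact Complex.continuous_conj.comp (continuous_zetaL.comp hη2fcont)
    · exact continuous_zetaL.comp hη2fcont
  have hM1cont : Continuous M1 := by
    rw [hM1def]
    split_ifs
    · exact Complex.continuous_conj.comp (continuous_zetaL.comp hη1fcont)
    · exact continuous_zetaL.comp hη1fcont
  -- initial values
  have hη2f0 : η2f 0 = η2z := by
    rw [hη2fdef]
    simp only [hcc0, hρ0]
    rw [hsw₀]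
    rw [show ((r:ℝ):ℂ) * (((c₀:ℝ):ℂ) + ((η2z.im / r : ℝ):ℂ) * I)
        = ((r * c₀ : ℝ):ℂ) + ((r * (η2z.im / r) : ℝ):ℂ) * I by push_cast; ring]
    rw [hc₀def]
    rw [mul_div_cancel₀ _ (ne_of_gt hr), mul_div_cancel₀ _ (ne_of_gt hr)]
    exact Complex.re_add_im η2z
  have hη1f0 : η1f 0 = η1z := by
    have hfrac : ((μ / ρ 0 : ℝ):ℂ) * (((cc 0 : ℝ):ℂ) - ((s * Real.sqrt (1 - (cc 0)^2) : ℝ):ℂ) * I)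
        = ((μ:ℝ):ℂ) / η2z := by
      rw [eq_div_iff hη2z0, ← hη2f0, hη2fdef]
      simp only []
      calc ((μ / ρ 0 : ℝ):ℂ) * (((cc 0 : ℝ):ℂ) - ((s * Real.sqrt (1 - (cc 0)^2) : ℝ):ℂ) * I)
            * (((ρ 0 : ℝ):ℂ) * (((cc 0 : ℝ):ℂ) + ((s * Real.sqrt (1 - (cc 0)^2) : ℝ):ℂ) * I))
          = ((μ / ρ 0 : ℝ):ℂ) * ((ρ 0 : ℝ):ℂ)
            * ((((cc 0 : ℝ):ℂ) + ((s * Real.sqrt (1 - (cc 0)^2) : ℝ):ℂ) * I)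
              * (((cc 0 : ℝ):ℂ) - ((s * Real.sqrt (1 - (cc 0)^2) : ℝ):ℂ) * I)) := by ring
        _ = ((μ / ρ 0 : ℝ):ℂ) * ((ρ 0 : ℝ):ℂ) := by rw [hunit 0]; ring
        _ = ((μ:ℝ):ℂ) := by
            rw [← Complex.ofReal_mul]; congr 1
            exact div_mul_cancel₀ μ (ne_of_gt (hρpos 0))
    have hη1z_eq : η1z = ((μ:ℝ):ℂ) / η2z - η2z := by
      field_simp
      linear_combination heq
    rw [hη1fdef]
    simp only []
    rw [hfrac, hη2f0, ← hη1z_eq]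
  -- the shifts matching the initial data
  have hcos0_2 : Complex.cos ((z₀.1 - z₀.2)/2) = Complex.cos (M2 0) := by
    rw [hcosM2 0, hη2f0, hη2zdef]
  have hcos0_1 : Complex.cos ((z₀.1 + z₀.2)/2) = Complex.cos (M1 0) := by
    rw [hcosM1 0, hη1f0, hη1zdef]
  obtain ⟨ε₂, δ₂, hε₂, hδ₂im, hδ₂cos, hshift₂⟩ := cos_shift_eq _ _ hcos0_2
  obtain ⟨ε₁, δ₁, hε₁, hδ₁im, hδ₁cos, hshift₁⟩ := cos_shift_eq _ _ hcos0_1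
  obtain ⟨Z2, hZ2def⟩ : ∃ x : ℝ → ℂ, x = fun t => ε₂ * M2 t + δ₂ := ⟨_, rfl⟩
  obtain ⟨Z1, hZ1def⟩ : ∃ x : ℝ → ℂ, x = fun t => ε₁ * M1 t + δ₁ := ⟨_, rfl⟩
  have hZ20 : Z2 0 = (z₀.1 - z₀.2)/2 := by rw [hZ2def]; simp only []; rw [← hshift₂]
  have hZ10 : Z1 0 = (z₀.1 + z₀.2)/2 := by rw [hZ1def]; simp only []; rw [← hshift₁]
  have hcosZ2 : ∀ t, Complex.cos (Z2 t) = η2f t := by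
    intro t; rw [hZ2def]; simp only []; rw [hδ₂cos, hcosM2]
  have hcosZ1 : ∀ t, Complex.cos (Z1 t) = η1f t := by
    intro t; rw [hZ1def]; simp only []; rw [hδ₁cos, hcosM1]
  have hZ2imsq : ∀ t, ((Z2 t).im)^2 = ((M2 t).im)^2 := by
    intro t
    rw [hZ2def]
    simp only []
    rcases hε₂ with h | h <;> rw [h] <;> simp [Complex.add_im, hδ₂im] <;> ring
  have hZ1imsq : ∀ t, ((Z1 t).im)^2 = ((M1 t).im)^2 := by
    intro t
    rw [hZ1def]
    simp only []
    rcases hε₁ with h | h <;> rw [h] <;> simp [Complex.add_im, hδ₁im] <;> ring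
  have hZ2cont : Continuous Z2 := by
    rw [hZ2def]; exact (continuous_const.mul hM2cont).add continuous_const
  have hZ1cont : Continuous Z1 := by
    rw [hZ1def]; exact (continuous_const.mul hM1cont).add continuous_const
  -- Ep monotonicity along the path
  have hform2 : ∀ t : ℝ, t ≤ 1/2 → η2f t
      = ((r * cc t : ℝ):ℂ) + (((r*s) * Real.sqrt (1 - (cc t)^2) : ℝ):ℂ)*I := by
    intro t ht
    rw [hη2fdef]
    simp only [hρ_half t ht]
    push_cast
    ring
  have hform1 : ∀ t : ℝ, t ≤ 1/2 → η1f t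
      = (((μ/r - r) * cc t : ℝ):ℂ) + (((-(s*(μ/r + r))) * Real.sqrt (1 - (cc t)^2) : ℝ):ℂ)*I := by
    intro t ht
    rw [hη1fdef, hη2fdef]
    simp only [hρ_half t ht]
    push_cast
    ring
  have hform2b : ∀ t : ℝ, 1/2 ≤ t → η2f t = ((ρ t * d : ℝ):ℂ) := by
    intro t ht
    rw [hη2fdef]
    simp only [hcc_half t ht]
    rw [show (1 : ℝ) - d^2 = 0 by rw [hd2]; ring, Real.sqrt_zero]
    push_cast
    ring
  have hform1b : ∀ t : ℝ, 1/2 ≤ t → η1f t = (((μ/ρ t - ρ t) * d : ℝ):ℂ) := by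
    intro t ht
    rw [hη1fdef, hη2fdef]
    simp only [hcc_half t ht]
    rw [show (1 : ℝ) - d^2 = 0 by rw [hd2]; ring, Real.sqrt_zero]
    push_cast
    ring
  have hEp2piece1 : ∀ t : ℝ, t ≤ 1/2 → EpC (η2f t) ≤ EpC (η2f 0) := by
    intro t ht
    rw [hform2 t ht, hform2 0 (by norm_num), hcc0]
    apply EpMono r (r*s) c₀ (cc t)
    · rw [mul_pow, hs2]; nlinarith
    · exact (hccfacts t).1
    · exact (hccfacts t).2
  have hEp1piece1 : ∀ t : ℝ, t ≤ 1/2 → EpC (η1f t) ≤ EpC (η1f 0) := by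
    intro t ht
    rw [hform1 t ht, hform1 0 (by norm_num), hcc0]
    apply EpMono (μ/r - r) (-(s*(μ/r + r))) c₀ (cc t)
    · have hμr : (μ/r)*r = μ := div_mul_cancel₀ μ (ne_of_gt hr)
      have hiden : (μ/r - r)^2 - (-(s*(μ/r+r)))^2 = -(4*μ) := by
        linear_combination (-(μ/r+r)^2) * hs2 + (-4) * hμr
      rw [hiden]; linarith
    · exact (hccfacts t).1
    · exact (hccfacts t).2
  have hEp2 : ∀ t : ℝ, EpC (η2f t) ≤ EpC (η2f 0) := by
    intro t
    rcases le_total t (1/2 : ℝ) with ht | ht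
    · exact hEp2piece1 t ht
    · calc EpC (η2f t) = max |ρ t * d| 1 := by rw [hform2b t ht, EpC_ofReal]
        _ = max |ρ t| 1 := by rw [abs_mul, habsd, mul_one]
        _ ≤ max |r| 1 := line_eta2 r rs (ρ t) (hρpos t).le hrs1 (hρhi t)
        _ = max |ρ (1/2) * d| 1 := by rw [hρ_half (1/2) (le_refl _), abs_mul, habsd, mul_one]
        _ = EpC (η2f (1/2)) := by rw [hform2b (1/2) (le_refl _), EpC_ofReal]
        _ ≤ EpC (η2f 0) := hEp2piece1 (1/2) (le_refl _)
  have hEp1 : ∀ t : ℝ, EpC (η1f t) ≤ EpC (η1f 0) := by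
    intro t
    rcases le_total t (1/2 : ℝ) with ht | ht
    · exact hEp1piece1 t ht
    · calc EpC (η1f t) = max |(μ/ρ t - ρ t) * d| 1 := by rw [hform1b t ht, EpC_ofReal]
        _ = max |μ/ρ t - ρ t| 1 := by rw [abs_mul, habsd, mul_one]
        _ ≤ max |μ/r - r| 1 := line_eta1 μ r rs (ρ t) hr (hρpos t) (hρlo t) (hρhi t) hcase
        _ = max |(μ/ρ (1/2) - ρ (1/2)) * d| 1 := by
            rw [hρ_half (1/2) (le_refl _), abs_mul, habsd, mul_one]
        _ = EpC (η1f (1/2)) := by rw [hform1b (1/2) (le_refl _), EpC_ofReal]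
        _ ≤ EpC (η1f 0) := hEp1piece1 (1/2) (le_refl _)
  -- endpoint values
  have hEp2end : EpC (η2f 1) = 1 := by
    rw [hform2b 1 (by norm_num), EpC_ofReal, hρ1, abs_mul, habsd, mul_one,
      _root_.abs_of_nonneg hrs0.le]
    exact max_eq_right hrs1
  have hEp1end : EpC (η1f 1) = 1 := by
    rw [hform1b 1 (by norm_num), EpC_ofReal, hρ1, abs_mul, habsd, mul_one]
    apply max_eq_right
    rcases hcase with ⟨hμp, hμ2, hrse⟩ | ⟨hμn, hrssq, _⟩
    · rw [hrse]
      rw [div_one]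
      rw [abs_le]
      constructor <;> linarith
    · have hμrs : μ/rs = -rs := by
        rw [div_eq_iff (ne_of_gt hrs0)]
        nlinarith
      rw [hμrs]
      have hrshalf : rs ≤ 1/2 := by nlinarith
      rw [show -rs - rs = -(2*rs) by ring, abs_neg, _root_.abs_of_nonneg (by linarith)]
      linarith
  -- the path
  refine ⟨fun t => (Z1 t + Z2 t, Z1 t - Z2 t), ?_, ?_, ?_, ?_, ?_⟩
  · exact ((hZ1cont.add hZ2cont).prodMk (hZ1cont.sub hZ2cont)).continuousOn
  · have : Z1 0 + Z2 0 = z₀.1 := by rw [hZ10, hZ20]; ring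
    have h2 : Z1 0 - Z2 0 = z₀.2 := by rw [hZ10, hZ20]; ring
    exact Prod.ext this h2
  · intro t _
    constructor
    · -- on the surface
      show Complex.cos (Z1 t + Z2 t) + Complex.cos (Z1 t - Z2 t)
          + Complex.cos ((Z1 t + Z2 t) - (Z1 t - Z2 t)) = _
      rw [fermi_sum (Z1 t) (Z2 t), hcosZ1 t, hcosZ2 t]
      have : 2 * η1f t * η2f t + 2 * η2f t ^ 2 - 1
          = 2 * (η2f t * (η1f t + η2f t)) - 1 := by ring
      rw [this, hprod t]
      rw [hμdef]
      push_cast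
      ring
    · -- in the strip
      show (Z1 t + Z2 t).im ^ 2 + (Z1 t - Z2 t).im ^ 2 < a^2
      have expand : (Z1 t + Z2 t).im ^ 2 + (Z1 t - Z2 t).im ^ 2
          = 2*((Z1 t).im^2 + (Z2 t).im^2) := by
        rw [Complex.add_im, Complex.sub_im]; ring
      have expand0 : (z₀.1.im)^2 + (z₀.2.im)^2
          = 2*((Z1 0).im^2 + (Z2 0).im^2) := by
        rw [hZ10, hZ20]
        rw [show ((z₀.1 + z₀.2)/2).im = (z₀.1.im + z₀.2.im)/2 by
          rw [show (z₀.1 + z₀.2)/2 = (((2:ℝ))⁻¹ : ℂ) * (z₀.1 + z₀.2) by push_cast; ring]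
          simp [Complex.mul_im, Complex.add_im]; ring]
        rw [show ((z₀.1 - z₀.2)/2).im = (z₀.1.im - z₀.2.im)/2 by
          rw [show (z₀.1 - z₀.2)/2 = (((2:ℝ))⁻¹ : ℂ) * (z₀.1 - z₀.2) by push_cast; ring]
          simp [Complex.mul_im, Complex.sub_im]; ring]
        ring
      have hyt1 : ((Z1 t).im)^2 ≤ ((Z1 0).im)^2 := by
        rw [hZ1imsq t, hZ1imsq 0, hM1imsq t, hM1imsq 0]
        have h1 : 0 ≤ acoshR (EpC (η1f t)) := acoshR_nonneg _ (one_le_EpC _)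
        have h2 : acoshR (EpC (η1f t)) ≤ acoshR (EpC (η1f 0)) :=
          acoshR_mono (one_le_EpC _) (hEp1 t)
        exact pow_le_pow_left₀ h1 h2 2
      have hyt2 : ((Z2 t).im)^2 ≤ ((Z2 0).im)^2 := by
        rw [hZ2imsq t, hZ2imsq 0, hM2imsq t, hM2imsq 0]
        have h1 : 0 ≤ acoshR (EpC (η2f t)) := acoshR_nonneg _ (one_le_EpC _)
        have h2 : acoshR (EpC (η2f t)) ≤ acoshR (EpC (η2f 0)) :=
          acoshR_mono (one_le_EpC _) (hEp2 t)
        exact pow_le_pow_left₀ h1 h2 2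
      have hstrip' : z₀.1.im ^ 2 + z₀.2.im ^ 2 < a ^ 2 := hstrip
      rw [expand]
      rw [expand0] at hstrip'
      linarith
  · -- endpoint real, first coordinate
    show (Z1 1 + Z2 1).im = 0
    have hM1end : (M1 1).im = 0 := by
      have : ((M1 1).im)^2 = 0 := by
        rw [hM1imsq 1, hEp1end, acoshR_one]
        ring
      exact pow_eq_zero_iff (n := 2) (by norm_num) |>.mp this
    have hM2end : (M2 1).im = 0 := by
      have : ((M2 1).im)^2 = 0 := by
        rw [hM2imsq 1, hEp2end, acoshR_one]
        ring
      exact pow_eq_zero_iff (n := 2) (by norm_num) |>.mp this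
    have hZ1end : (Z1 1).im = 0 := by
      rw [hZ1def]
      simp only []
      rcases hε₁ with h | h <;> rw [h] <;> simp [Complex.add_im, hδ₁im, hM1end]
    have hZ2end : (Z2 1).im = 0 := by
      rw [hZ2def]
      simp only []
      rcases hε₂ with h | h <;> rw [h] <;> simp [Complex.add_im, hδ₂im, hM2end]
    rw [Complex.add_im, hZ1end, hZ2end]
    ring
  · show (Z1 1 - Z2 1).im = 0
    have hM1end : (M1 1).im = 0 := by
      have : ((M1 1).im)^2 = 0 := by
        rw [hM1imsq 1, hEp1end, acoshR_one]; ring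
      exact pow_eq_zero_iff (n := 2) (by norm_num) |>.mp this
    have hM2end : (M2 1).im = 0 := by
      have : ((M2 1).im)^2 = 0 := by
        rw [hM2imsq 1, hEp2end, acoshR_one]; ring
      exact pow_eq_zero_iff (n := 2) (by norm_num) |>.mp this
    have hZ1end : (Z1 1).im = 0 := by
      rw [hZ1def]
      simp only []
      rcases hε₁ with h | h <;> rw [h] <;> simp [Complex.add_im, hδ₁im, hM1end]
    have hZ2end : (Z2 1).im = 0 := by
      rw [hZ2def]
      simp only []
      rcases hε₂ with h | h <;> rw [h] <;> simp [Complex.add_im, hδ₂im, hM2end]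
    rw [Complex.sub_im, hZ1end, hZ2end]
    ring

end

/-- For the hexagonal lattice and `λ ∈ (−1,1) \ {0}`, every point of
`M^ℂ_{λ,reg} ∩ Ω_a` can be joined by a continuous path inside `M^ℂ_{λ,reg} ∩ Ω_a` to a
point of `M^ℂ_{λ,reg} ∩ 𝕋²` (a real point of the regular Fermi surface). -/
theorem stmt_15 (lam : ℝ) (hlam : lam ∈ Set.Ioo (-1 : ℝ) 1) (hlam0 : lam ≠ 0)
    (a : ℝ) (ha : 0 < a) :
    ∀ z₀ ∈ hexFermiReg lam ∩ hexStrip a,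
      ∃ c : ℝ → ℂ × ℂ, ContinuousOn c (Set.Icc 0 1) ∧
        c 0 = z₀ ∧
        (∀ t ∈ Set.Icc (0 : ℝ) 1, c t ∈ hexFermiReg lam ∩ hexStrip a) ∧
        (c 1).1.im = 0 ∧ (c 1).2.im = 0 := by
  intro z₀ hz₀
  obtain ⟨hreg, hstripm⟩ := hz₀
  have hl1 : lam^2 < 1 := by nlinarith [hlam.1, hlam.2]
  by_cases hreal : z₀.1.im = 0 ∧ z₀.2.im = 0
  · exact ⟨fun _ => z₀, continuousOn_const, rfl, fun t _ => ⟨hreg, hstripm⟩, hreal.1, hreal.2⟩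
  · by_cases h19 : lam^2 = 1/9
    · exact mu0_case lam a h19 z₀ hreg hstripm hreal
    · obtain ⟨c, hc, hc0, hmem, he1, he2⟩ := main_case lam a hl1 hlam0 h19 z₀ hreg.1 hstripm
      refine ⟨c, hc, hc0, ?_, he1, he2⟩
      intro t ht
      obtain ⟨hm1, hm2⟩ := hmem t ht
      exact ⟨reg_all lam hl1 hlam0 h19 _ hm1, hm2⟩
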